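/- arXiv:2404.12613 — 3 statements merged into one kernel-verified Lean document; each statement's English description precedes it below -/
import Mathlib

section
/- Let x_1, ..., x_k be pairwise distinct complex numbers and let V_k be the k×k Vandermonde matrix with entries (V_k)_{i,j} = x_j^{i−1}. Then the maximum absolute row sum norm of its inverse satisfies ‖V_k^{−1}‖_∞ ≤ max_{1 ≤ j ≤ k} ∏_{i ≠ j} (1 + |x_i|)/|x_i − x_j|. -/
open Polynomial Finset

/-- The operator norm induced by the `ℓ^∞` vector norm: maximum absolute row sum. -/
noncomputable def maxRowSumNorm {k : ℕ} (A : Matrix (Fin k) (Fin k) ℂ) : ℝ :=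
  ⨆ i : Fin k, ∑ j : Fin k, ‖A i j‖

private lemma step_bound (a : ℂ) (q : ℂ[X]) (n : ℕ) :
    ∑ i ∈ range n, ‖((X - C a) * q).coeff i‖ ≤
      (1 + ‖a‖) * ∑ i ∈ range n, ‖q.coeff i‖ := by
  have hXq : ∑ i ∈ range n, ‖(X * q).coeff i‖
      ≤ ∑ i ∈ range n, ‖q.coeff i‖ := by
    cases n with
    | zero => simp
    | succ m =>
      have h0 : (X * q).coeff 0 = 0 := by
        rw [Polynomial.mul_coeff_zero, Polynomial.coeff_X_zero, zero_mul]
      rw [Finset.sum_range_succ', h0, norm_zero, add_zero,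
        Finset.sum_congr rfl (fun i _ => by rw [Polynomial.coeff_X_mul])]
      exact Finset.sum_le_sum_of_subset_of_nonneg
        (Finset.range_subset_range.mpr (Nat.le_succ m)) (fun i _ _ => by positivity)
  have h1 : ∑ i ∈ range n, ‖((X - C a) * q).coeff i‖
      ≤ ∑ i ∈ range n, (‖(X * q).coeff i‖
          + ‖a‖ * ‖q.coeff i‖) := by
    apply Finset.sum_le_sum
    intro i _
    rw [sub_mul, Polynomial.coeff_sub, Polynomial.coeff_C_mul, ← norm_mul]
    exact norm_sub_le _ _
  rw [Finset.sum_add_distrib, ← Finset.mul_sum] at h1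
  nlinarith [add_le_add_right hXq (‖a‖ * ∑ i ∈ range n, ‖q.coeff i‖), h1]

private lemma prod_bound {ι : Type*} [DecidableEq ι] (s : Finset ι) (v : ι → ℂ) (n : ℕ)
    (hn : 1 ≤ n) :
    ∑ i ∈ range n, ‖(∏ m ∈ s, (X - C (v m))).coeff i‖ ≤
      ∏ m ∈ s, (1 + ‖v m‖) := by
  induction s using Finset.induction_on with
  | empty =>
      simp only [Finset.prod_empty, Polynomial.coeff_one]
      rw [Finset.sum_congr rfl (fun i _ => show
          ‖if i = 0 then (1:ℂ) else 0‖ = if i = 0 then (1:ℝ) else 0 by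
        by_cases h : i = 0 <;> simp [h]),
        Finset.sum_ite_eq' (range n) 0 (fun _ => (1:ℝ))]
      simp only [Finset.mem_range]
      split <;> [exact le_refl 1; norm_num]
  | @insert a s' ha ih =>
      rw [Finset.prod_insert ha, Finset.prod_insert ha]
      refine le_trans (step_bound (v a) (∏ m ∈ s', (X - C (v m))) n) ?_
      apply mul_le_mul_of_nonneg_left ih
      positivity

/-- **Gautschi's bound for the inverse of a Vandermonde matrix.**
If `x₁,…,x_k` are pairwise distinct and `(V_k)_{i,j} = x_j^(i−1)`, then
`‖V_k⁻¹‖_∞ ≤ max_j ∏_{i ≠ j} (1+|x_i|)/|x_i − x_j|`. -/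
theorem vandermonde_inverse_norm_bound (k : ℕ) (x : Fin k → ℂ)
    (hx : Function.Injective x)
    (V : Matrix (Fin k) (Fin k) ℂ) (hV : ∀ i j, V i j = x j ^ (i : ℕ)) :
    maxRowSumNorm V⁻¹ ≤
      ⨆ j : Fin k, ∏ i ∈ Finset.univ.erase j,
        (1 + ‖x i‖) / ‖x i - x j‖ := by
  classical
  rcases Nat.eq_zero_or_pos k with hk | hk
  · subst hk
    rw [maxRowSumNorm, iSup_of_empty', iSup_of_empty', Real.sSup_empty]
  have : Nonempty (Fin k) := ⟨⟨0, hk⟩⟩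
  set L : Fin k → ℂ[X] := fun j => Lagrange.basis Finset.univ x j with hL
  set W : Matrix (Fin k) (Fin k) ℂ := Matrix.of fun j i => (L j).coeff i with hW
  have hdeg : ∀ j, (L j).natDegree < k := by
    intro j
    rw [hL, Lagrange.natDegree_basis hx.injOn (Finset.mem_univ j), Finset.card_univ,
      Fintype.card_fin]
    omega
  have hWV : W * V = 1 := by
    ext j j'
    rw [Matrix.mul_apply]
    simp only [hW, Matrix.of_apply, hV]
    rw [Fin.sum_univ_eq_sum_range (fun i => (L j).coeff i * x j' ^ i) k,
      ← Polynomial.eval_eq_sum_range' (hdeg j)]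
    by_cases h : j = j'
    · subst h
      rw [hL, Lagrange.eval_basis_self hx.injOn (Finset.mem_univ j), Matrix.one_apply_eq]
    · rw [hL, Lagrange.eval_basis_of_ne h (Finset.mem_univ j'), Matrix.one_apply_ne h]
  rw [Matrix.inv_eq_left_inv hWV, maxRowSumNorm]
  apply ciSup_le
  intro j
  refine le_trans ?_ (le_ciSup (Set.Finite.bddAbove (Set.finite_range _)) j)
  -- rewrite the Lagrange basis polynomial as a constant times ∏ (X - C (x i))
  have hLj : L j = C (∏ i ∈ Finset.univ.erase j, (x j - x i)⁻¹) *
      ∏ i ∈ Finset.univ.erase j, (X - C (x i)) := by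
    rw [hL]
    simp only [Lagrange.basis, Lagrange.basisDivisor]
    rw [Finset.prod_mul_distrib, map_prod]
  have hrow : ∑ i : Fin k, ‖W j i‖
      = ‖∏ i ∈ Finset.univ.erase j, (x j - x i)⁻¹‖ *
        ∑ i ∈ range k, ‖(∏ i ∈ Finset.univ.erase j, (X - C (x i))).coeff i‖ := by
    simp only [hW, Matrix.of_apply]
    rw [Fin.sum_univ_eq_sum_range (fun i => ‖(L j).coeff i‖) k, Finset.mul_sum]
    refine Finset.sum_congr rfl fun i _ => ?_
    rw [hLj, Polynomial.coeff_C_mul, norm_mul]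
  rw [hrow]
  have habs : ‖∏ i ∈ Finset.univ.erase j, (x j - x i)⁻¹‖
      = ∏ i ∈ Finset.univ.erase j, (‖x i - x j‖)⁻¹ := by
    rw [norm_prod]
    refine Finset.prod_congr rfl fun i _ => ?_
    rw [norm_inv, norm_sub_rev]
  rw [habs]
  have hbound := prod_bound (Finset.univ.erase j) x k hk
  have hpos : 0 ≤ ∏ i ∈ Finset.univ.erase j, (‖x i - x j‖)⁻¹ :=
    Finset.prod_nonneg fun i _ => inv_nonneg.mpr (norm_nonneg _)
  refine le_trans (mul_le_mul_of_nonneg_left hbound hpos) (le_of_eq ?_)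
  rw [← Finset.prod_mul_distrib]
  exact Finset.prod_congr rfl fun i _ => by rw [div_eq_mul_inv, mul_comm]
end

section
/- Let D ∈ ℂ^{(K+1)×k} have full column rank k, and Π ∈ ℂ^{k×k} be invertible diagonal. Then the k-th largest singular value of H = D Π Dᵀ satisfies σ_k(H) ≥ σ_*(D)² σ_*(Π), where σ_*(D) is the smallest singular value of D and σ_*(Π) = min_i |Π_{ii}|. -/
/-- The `l`-th largest singular value (0-based) of a complex `m × n` matrix. -/
noncomputable def singularValue {m n : ℕ} (A : Matrix (Fin m) (Fin n) ℂ) (l : Fin n) : ℝ :=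
  Real.sqrt ((Matrix.isHermitian_conjTranspose_mul_self A).eigenvalues
    (Tuple.sort (Matrix.isHermitian_conjTranspose_mul_self A).eigenvalues l.rev))

open Matrix

noncomputable def toE {n : ℕ} (v : Fin n → ℂ) : EuclideanSpace ℂ (Fin n) :=
  (WithLp.linearEquiv 2 ℂ (Fin n → ℂ)).symm v

@[simp] lemma toE_apply {n : ℕ} (v : Fin n → ℂ) (i : Fin n) : toE v i = v i := rfl

lemma toE_coe {n : ℕ} (x : EuclideanSpace ℂ (Fin n)) : toE (⇑x) = x := rfl

lemma inner_toE {n : ℕ} (v w : Fin n → ℂ) :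
    (inner ℂ (toE v) (toE w) : ℂ) = star v ⬝ᵥ w := by
  simp [PiLp.inner_apply, dotProduct, RCLike.inner_apply, mul_comm]

lemma norm_toE_sq {n : ℕ} (v : Fin n → ℂ) :
    ‖toE v‖ ^ 2 = ∑ i, ‖v i‖ ^ 2 := by
  rw [EuclideanSpace.norm_eq, Real.sq_sqrt]
  · rfl
  · positivity

noncomputable def euclidL {n : ℕ} (A : Matrix (Fin n) (Fin n) ℂ) :
    EuclideanSpace ℂ (Fin n) →ₗ[ℂ] EuclideanSpace ℂ (Fin n) :=
  ((WithLp.linearEquiv 2 ℂ (Fin n → ℂ)).symm.toLinearMap.comp A.mulVecLin).comp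
    (WithLp.linearEquiv 2 ℂ (Fin n → ℂ)).toLinearMap

lemma euclidL_apply {n : ℕ} (A : Matrix (Fin n) (Fin n) ℂ) (x : EuclideanSpace ℂ (Fin n)) :
    euclidL A x = toE (A *ᵥ ⇑x) := rfl

lemma re_inner_mulVec_eq {n : ℕ} {A : Matrix (Fin n) (Fin n) ℂ} (hA : A.IsHermitian)
    (x : EuclideanSpace ℂ (Fin n)) :
    (inner ℂ x (toE (A *ᵥ ⇑x)) : ℂ).re
      = ∑ i, hA.eigenvalues i * ‖hA.eigenvectorBasis.repr x i‖ ^ 2 := by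
  set B := hA.eigenvectorBasis with hB
  have hx : x = ∑ i, B.repr x i • B i := (B.sum_repr x).symm
  have hLB : ∀ i, euclidL A (B i) = (hA.eigenvalues i : ℂ) • B i := by
    intro i
    have := hA.mulVec_eigenvectorBasis i
    rw [euclidL_apply]
    apply (WithLp.linearEquiv 2 ℂ (Fin n → ℂ)).injective
    exact this
  have hAx : toE (A *ᵥ ⇑x) = ∑ i, (B.repr x i * hA.eigenvalues i) • B i := by
    rw [← euclidL_apply]
    conv_lhs => rw [hx]
    rw [map_sum]
    congr 1; funext i
    rw [_root_.map_smul, hLB i, smul_smul]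
  rw [hAx, inner_sum]
  rw [Complex.re_sum]
  congr 1; funext i
  rw [inner_smul_right]
  have h1 : (inner ℂ x (B i) : ℂ) = (starRingEnd ℂ) (B.repr x i) := by
    rw [← inner_conj_symm, B.repr_apply_apply x i]
  rw [h1]
  have : B.repr x i * (hA.eigenvalues i : ℂ) * (starRingEnd ℂ) (B.repr x i)
      = (hA.eigenvalues i : ℂ) * (B.repr x i * (starRingEnd ℂ) (B.repr x i)) := by ring
  rw [this, Complex.mul_conj']
  rw [← Complex.ofReal_pow, ← Complex.ofReal_mul, Complex.ofReal_re]

lemma norm_repr_sq {n : ℕ} {A : Matrix (Fin n) (Fin n) ℂ} (hA : A.IsHermitian)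
    (x : EuclideanSpace ℂ (Fin n)) :
    ∑ i, ‖hA.eigenvectorBasis.repr x i‖ ^ 2 = ‖x‖ ^ 2 := by
  rw [← hA.eigenvectorBasis.repr.norm_map x, ← norm_toE_sq]
  rfl

lemma rayleigh_lower {n : ℕ} {A : Matrix (Fin n) (Fin n) ℂ} (hA : A.IsHermitian)
    {m : ℝ} (hm : ∀ i, m ≤ hA.eigenvalues i) (x : EuclideanSpace ℂ (Fin n)) :
    m * ‖x‖ ^ 2 ≤ (inner ℂ x (toE (A *ᵥ ⇑x)) : ℂ).re := by
  rw [re_inner_mulVec_eq hA, ← norm_repr_sq hA x, Finset.mul_sum]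
  refine Finset.sum_le_sum fun i _ => ?_
  exact mul_le_mul_of_nonneg_right (hm i) (by positivity)

lemma rayleigh_upper {n : ℕ} {A : Matrix (Fin n) (Fin n) ℂ} (hA : A.IsHermitian)
    {M : ℝ} (x : EuclideanSpace ℂ (Fin n))
    (hM : ∀ i, hA.eigenvectorBasis.repr x i ≠ 0 → hA.eigenvalues i ≤ M) :
    (inner ℂ x (toE (A *ᵥ ⇑x)) : ℂ).re ≤ M * ‖x‖ ^ 2 := by
  rw [re_inner_mulVec_eq hA, ← norm_repr_sq hA x, Finset.mul_sum]
  refine Finset.sum_le_sum fun i _ => ?_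
  by_cases h : hA.eigenvectorBasis.repr x i = 0
  · simp [h]
  · exact mul_le_mul_of_nonneg_right (hM i h) (by positivity)

lemma re_inner_conjTranspose_mul {m n : ℕ} (M : Matrix (Fin m) (Fin n) ℂ)
    (x : EuclideanSpace ℂ (Fin n)) :
    (inner ℂ x (toE ((Mᴴ * M) *ᵥ ⇑x)) : ℂ).re = ‖toE (M *ᵥ ⇑x)‖ ^ 2 := by
  have h0 : x = toE ⇑x := rfl
  conv_lhs => rw [h0]
  rw [inner_toE, ← Matrix.mulVec_mulVec, Matrix.dotProduct_mulVec, ← Matrix.star_mulVec]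
  have h2 : (star (M *ᵥ ⇑x) ⬝ᵥ (M *ᵥ ⇑x) : ℂ).re = ‖toE (M *ᵥ ⇑x)‖ ^ 2 := by
    rw [← inner_toE]
    exact inner_self_eq_norm_sq (𝕜 := ℂ) _
  exact h2

lemma sort_min {n : ℕ} (f : Fin n → ℝ) (j i : Fin n) (hj : j.val = 0) :
    f (Tuple.sort f j) ≤ f i := by
  have h := Tuple.monotone_sort f (a := j) (b := (Tuple.sort f).symm i)
    (by rw [Fin.le_def, hj]; exact Nat.zero_le _)
  simpa [Function.comp] using h

lemma conj_mulVec {a b : ℕ} (M : Matrix (Fin a) (Fin b) ℂ) (v : Fin b → ℂ) :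
    (M.map (starRingEnd ℂ)) *ᵥ v
      = fun i => (starRingEnd ℂ) ((M *ᵥ fun j => (starRingEnd ℂ) (v j)) i) := by
  funext i
  simp [Matrix.mulVec, dotProduct, Matrix.map_apply, map_sum]

lemma norm_toE_conj {a : ℕ} (v : Fin a → ℂ) :
    ‖toE (fun i => (starRingEnd ℂ) (v i))‖ = ‖toE v‖ := by
  rw [EuclideanSpace.norm_eq, EuclideanSpace.norm_eq]
  simp

/-- **Lower bound for the `k`-th singular value of `H = D Π Dᵀ`.**
If `D ∈ ℂ^{(K+1)×k}` has full column rank `k` and `Π` is an invertible diagonal matrix,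
then `σ_k(H) ≥ σ_*(D)² σ_*(Π)` where `σ_*(D)` is the smallest singular value of `D`
and `σ_*(Π) = min_i |Π_{ii}|`. -/
theorem singular_value_DPiDT_lower_bound (k K : ℕ) (hk : 0 < k) (hKk : k ≤ K + 1)
    (D : Matrix (Fin (K + 1)) (Fin k) ℂ) (hD : D.rank = k)
    (π : Fin k → ℂ) (hπ : ∀ i, π i ≠ 0) :
    (singularValue D ⟨k - 1, by omega⟩) ^ 2 * (⨅ i : Fin k, ‖π i‖) ≤
      singularValue (D * Matrix.diagonal π * D.transpose) ⟨k - 1, by omega⟩ := by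
  have : Nonempty (Fin k) := ⟨⟨0, hk⟩⟩
  set σ := singularValue D ⟨k - 1, by omega⟩ with hσdef
  set P := ⨅ i : Fin k, ‖π i‖ with hPdef
  have hσ0 : 0 ≤ σ := Real.sqrt_nonneg _
  have hP0 : 0 ≤ P := le_ciInf fun i => norm_nonneg _
  have hPle : ∀ i, P ≤ ‖π i‖ := fun i => ciInf_le (Finite.bddBelow_range _) i
  rcases eq_or_lt_of_le hσ0 with hσz | hσpos
  · have h : ((0:ℝ)) ^ 2 * P = 0 := by ring
    rw [← hσz, h]
    exact Real.sqrt_nonneg _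
  -- eigen data for D
  have hAD := Matrix.isHermitian_conjTranspose_mul_self D
  have hσsq : ∀ w : Fin k → ℂ, σ ^ 2 * ‖toE w‖ ^ 2 ≤ ‖toE (D *ᵥ w)‖ ^ 2 := by
    intro w
    have h1 : σ ^ 2 = hAD.eigenvalues (Tuple.sort hAD.eigenvalues (Fin.rev ⟨k - 1, by omega⟩)) :=
      Real.sq_sqrt (Matrix.eigenvalues_conjTranspose_mul_self_nonneg D _)
    have hmin : ∀ i, σ ^ 2 ≤ hAD.eigenvalues i := by
      intro i
      rw [h1]
      exact sort_min hAD.eigenvalues _ i (by simp [Fin.rev]; omega)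
    have h2 := rayleigh_lower hAD hmin (toE w)
    have h3 := re_inner_conjTranspose_mul D (toE w)
    have hw : (⇑(toE w) : Fin k → ℂ) = w := rfl
    rw [hw] at h2 h3
    rw [h3] at h2
    exact h2
  have hDlow : ∀ w : Fin k → ℂ, σ * ‖toE w‖ ≤ ‖toE (D *ᵥ w)‖ := by
    intro w
    have := hσsq w
    nlinarith [norm_nonneg (toE w), norm_nonneg (toE (D *ᵥ w)), hσ0, mul_nonneg hσ0 (norm_nonneg (toE w))]
  -- adjoint step
  have hadj : ∀ w : Fin k → ℂ, σ * ‖toE (D *ᵥ w)‖ ≤ ‖toE (Dᴴ *ᵥ (D *ᵥ w))‖ := by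
    intro w
    by_cases hz : ‖toE (D *ᵥ w)‖ = 0
    · rw [hz, mul_zero]; exact norm_nonneg _
    · have hzpos : 0 < ‖toE (D *ᵥ w)‖ := lt_of_le_of_ne (norm_nonneg _) (Ne.symm hz)
      have hcs : ‖toE (D *ᵥ w)‖ ^ 2 ≤ ‖toE w‖ * ‖toE (Dᴴ *ᵥ (D *ᵥ w))‖ := by
        have h1 : (‖toE (D *ᵥ w)‖ : ℝ) ^ 2
            = (inner ℂ (toE (D *ᵥ w)) (toE (D *ᵥ w)) : ℂ).re :=
          (inner_self_eq_norm_sq (𝕜 := ℂ) _).symm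
        have h2 : (inner ℂ (toE (D *ᵥ w)) (toE (D *ᵥ w)) : ℂ)
            = (inner ℂ (toE w) (toE (Dᴴ *ᵥ (D *ᵥ w))) : ℂ) := by
          rw [inner_toE, inner_toE, Matrix.star_mulVec, ← Matrix.dotProduct_mulVec]
        have h3 := re_inner_le_norm (𝕜 := ℂ) (toE w) (toE (Dᴴ *ᵥ (D *ᵥ w)))
        rw [h1, h2]
        exact h3
      have h4 := hDlow w
      have h5 : σ * ‖toE (D *ᵥ w)‖ * ‖toE (D *ᵥ w)‖ ≤ ‖toE (Dᴴ *ᵥ (D *ᵥ w))‖ * ‖toE (D *ᵥ w)‖ := by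
        nlinarith [norm_nonneg (toE w), norm_nonneg (toE (Dᴴ *ᵥ (D *ᵥ w)))]
      exact le_of_mul_le_mul_right h5 hzpos
  -- diagonal step
  have hdiag : ∀ z : Fin k → ℂ, P * ‖toE z‖ ≤ ‖toE ((Matrix.diagonal π) *ᵥ z)‖ := by
    intro z
    have hsq : (P * ‖toE z‖) ^ 2 ≤ ‖toE ((Matrix.diagonal π) *ᵥ z)‖ ^ 2 := by
      rw [mul_pow, norm_toE_sq, norm_toE_sq, Finset.mul_sum]
      refine Finset.sum_le_sum fun i _ => ?_
      rw [Matrix.mulVec_diagonal, norm_mul, mul_pow]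
      have : P ^ 2 ≤ ‖π i‖ ^ 2 := by
        have := hPle i
        nlinarith [norm_nonneg (π i)]
      nlinarith [norm_nonneg (z i), sq_nonneg ‖z i‖]
    have h1 : 0 ≤ P * ‖toE z‖ := mul_nonneg hP0 (norm_nonneg _)
    nlinarith [norm_nonneg (toE ((Matrix.diagonal π) *ᵥ z))]
  -- injectivity of D *ᵥ ·
  have hDinj : Function.Injective (D *ᵥ ·) := by
    have h1 := LinearMap.finrank_range_add_finrank_ker (Matrix.mulVecLin D)
    have hrange : Module.finrank ℂ (LinearMap.range D.mulVecLin) = k := hD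
    rw [hrange, Module.finrank_fintype_fun_eq_card, Fintype.card_fin] at h1
    have h2 : Module.finrank ℂ (LinearMap.ker D.mulVecLin) = 0 := by omega
    have h3 : LinearMap.ker D.mulVecLin = ⊥ := Submodule.finrank_eq_zero.mp h2
    exact LinearMap.ker_eq_bot.mp h3
  -- eigen data for H
  set H := D * Matrix.diagonal π * D.transpose with hHdef
  have hAH := Matrix.isHermitian_conjTranspose_mul_self H
  set ν := hAH.eigenvalues with hν
  set τ := Tuple.sort ν with hτ
  set B := hAH.eigenvectorBasis with hB
  set p : Fin (K + 1) := Fin.rev ⟨k - 1, by omega⟩ with hp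
  set Dc := D.map (starRingEnd ℂ) with hDc
  let ψ : (Fin k → ℂ) →ₗ[ℂ] EuclideanSpace ℂ (Fin (K + 1)) :=
    (WithLp.linearEquiv 2 ℂ (Fin (K + 1) → ℂ)).symm.toLinearMap.comp Dc.mulVecLin
  let Φ : (Fin k → ℂ) →ₗ[ℂ] ({j : Fin (K + 1) // p < j} → ℂ) :=
    (LinearMap.pi fun j : {j : Fin (K + 1) // p < j} =>
      (LinearMap.proj (τ j.1)).comp
        ((WithLp.linearEquiv 2 ℂ (Fin (K + 1) → ℂ)).toLinearMap.comp
          B.repr.toLinearEquiv.toLinearMap)).comp ψ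
  have hΦapp : ∀ (y : Fin k → ℂ) (j : {j : Fin (K + 1) // p < j}),
      Φ y j = B.repr (toE (Dc *ᵥ y)) (τ j.1) := fun y j => rfl
  have hcard : Fintype.card {j : Fin (K + 1) // p < j} = k - 1 := by
    rw [Fintype.card_subtype]
    have hf : Finset.filter (fun j => p < j) Finset.univ = Finset.Ioi p :=
      Finset.ext fun j => by simp
    rw [hf, Fin.card_Ioi]
    have : (p : ℕ) = K + 1 - k := by simp [hp, Fin.rev]; omega
    omega
  have hΦnotinj : ¬ Function.Injective Φ := by
    intro hinj
    have hle := LinearMap.finrank_le_finrank_of_injective hinj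
    rw [Module.finrank_fintype_fun_eq_card, Module.finrank_fintype_fun_eq_card,
      Fintype.card_fin, hcard] at hle
    omega
  obtain ⟨y, hyker, hy0⟩ :=
    (Submodule.ne_bot_iff _).mp (fun h => hΦnotinj (LinearMap.ker_eq_bot.mp h))
  have hΦy : Φ y = 0 := LinearMap.mem_ker.mp hyker
  set x' : Fin (K + 1) → ℂ := Dc *ᵥ y with hx'
  set x : EuclideanSpace ℂ (Fin (K + 1)) := toE x' with hx
  have hcx : (⇑x : Fin (K + 1) → ℂ) = x' := rfl
  have hx0 : x ≠ 0 := by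
    intro h
    apply hy0
    have hcm : x' = fun i => (starRingEnd ℂ) ((D *ᵥ fun j => (starRingEnd ℂ) (y j)) i) :=
      conj_mulVec D y
    have h2 : (D *ᵥ fun j => (starRingEnd ℂ) (y j)) = 0 := by
      funext i
      have h1 : x' i = 0 := by
        have := congrFun (congrArg (fun (z : EuclideanSpace ℂ (Fin (K + 1))) => (z : Fin (K + 1) → ℂ)) h) i
        rw [← hcx]
        simpa using this
      rw [hcm] at h1
      simpa using h1
    have h3 : (fun j => (starRingEnd ℂ) (y j)) = (0 : Fin k → ℂ) := by
      apply hDinj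
      simpa [Matrix.mulVec_zero] using h2
    funext i
    have := congrFun h3 i
    simpa using this
  -- support of x in the eigenbasis
  have hsupp : ∀ i, B.repr x i ≠ 0 → ν i ≤ ν (τ p) := by
    intro i hi
    by_cases hpj : p < τ.symm i
    · exfalso
      apply hi
      have h1 : B.repr (toE (Dc *ᵥ y)) (τ (τ.symm i)) = 0 := by
        rw [← hΦapp y ⟨τ.symm i, hpj⟩, hΦy]
        rfl
      rw [τ.apply_symm_apply i] at h1
      exact h1
    · push_neg at hpj
      have h3 := Tuple.monotone_sort ν hpj
      have h2 : τ (τ.symm i) = i := τ.apply_symm_apply i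
      calc ν i = ν (τ (τ.symm i)) := by rw [h2]
        _ ≤ ν (τ p) := h3
  -- Rayleigh upper bound
  have hup : ‖toE (H *ᵥ x')‖ ^ 2 ≤ ν (τ p) * ‖x‖ ^ 2 := by
    have h1 := rayleigh_upper hAH x hsupp
    have h2 := re_inner_conjTranspose_mul H x
    rw [hcx] at h1 h2
    rw [h2] at h1
    exact h1
  -- lower bound chain
  have e1 : Dᵀ *ᵥ x' = fun i =>
      (starRingEnd ℂ) ((Dᴴ *ᵥ (D *ᵥ fun j => (starRingEnd ℂ) (y j))) i) := by
    have hDt : Dᴴ.map (starRingEnd ℂ) = Dᵀ := by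
      funext i j
      simp [Matrix.conjTranspose_apply, Matrix.map_apply]
    have h1 := conj_mulVec Dᴴ x'
    rw [hDt] at h1
    rw [h1]
    congr 1
    have hcm : x' = fun i => (starRingEnd ℂ) ((D *ᵥ fun j => (starRingEnd ℂ) (y j)) i) :=
      conj_mulVec D y
    funext i
    rw [hcm]
    simp
  have hstep1 : σ * ‖x‖ ≤ ‖toE (Dᵀ *ᵥ x')‖ := by
    rw [e1, norm_toE_conj]
    have h5 := hadj (fun j => (starRingEnd ℂ) (y j))
    have h6 : ‖x‖ = ‖toE (D *ᵥ fun j => (starRingEnd ℂ) (y j))‖ := by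
      rw [hx, hx', conj_mulVec D y, norm_toE_conj]
    rw [h6]
    exact h5
  have hstep2 : P * (σ * ‖x‖) ≤ ‖toE ((Matrix.diagonal π) *ᵥ (Dᵀ *ᵥ x'))‖ :=
    le_trans (mul_le_mul_of_nonneg_left hstep1 hP0) (hdiag _)
  have hstep3 : σ * (P * (σ * ‖x‖)) ≤ ‖toE (H *ᵥ x')‖ := by
    have h7 : ∀ v : Fin (K + 1) → ℂ, H *ᵥ v = D *ᵥ ((Matrix.diagonal π) *ᵥ (Dᵀ *ᵥ v)) := by
      intro v
      rw [Matrix.mulVec_mulVec, Matrix.mulVec_mulVec, hHdef, Matrix.mul_assoc]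
    rw [h7 x']
    exact le_trans (mul_le_mul_of_nonneg_left hstep2 hσ0) (hDlow _)
  have hxpos : 0 < ‖x‖ := norm_pos_iff.mpr hx0
  have hfinal : (σ ^ 2 * P) ^ 2 ≤ ν (τ p) := by
    have h9 : (σ ^ 2 * P) * ‖x‖ ≤ ‖toE (H *ᵥ x')‖ := by
      have h8 : σ * (P * (σ * ‖x‖)) = (σ ^ 2 * P) * ‖x‖ := by ring
      rw [← h8]
      exact hstep3
    have hc0 : 0 ≤ σ ^ 2 * P := mul_nonneg (sq_nonneg σ) hP0
    have h10 : ((σ ^ 2 * P) * ‖x‖) ^ 2 ≤ ν (τ p) * ‖x‖ ^ 2 := by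
      calc ((σ ^ 2 * P) * ‖x‖) ^ 2 ≤ ‖toE (H *ᵥ x')‖ ^ 2 :=
            pow_le_pow_left₀ (mul_nonneg hc0 (norm_nonneg x)) h9 2
        _ ≤ ν (τ p) * ‖x‖ ^ 2 := hup
    have hx2 : 0 < ‖x‖ ^ 2 := by positivity
    have h11 : (σ ^ 2 * P) ^ 2 * ‖x‖ ^ 2 ≤ ν (τ p) * ‖x‖ ^ 2 := by
      have he : ((σ ^ 2 * P) * ‖x‖) ^ 2 = (σ ^ 2 * P) ^ 2 * ‖x‖ ^ 2 := by ring
      rw [← he]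
      exact h10
    exact le_of_mul_le_mul_right h11 hx2
  have hgoal : singularValue H ⟨k - 1, by omega⟩ = Real.sqrt (ν (τ p)) := rfl
  rw [hgoal]
  have hc0 : 0 ≤ σ ^ 2 * P := mul_nonneg (sq_nonneg σ) hP0
  calc σ ^ 2 * P = Real.sqrt ((σ ^ 2 * P) ^ 2) := (Real.sqrt_sq hc0).symm
    _ ≤ Real.sqrt (ν (τ p)) := Real.sqrt_le_sqrt hfinal
end

section
/- Let μ_1 < μ_2 < ... < μ_k be real numbers in [−π/(2h), π/(2h)) with minimum separation d_min (h > 0). Then for each j, ∏_{i ≠ j} |e^{iμ_i h} − e^{iμ_j h}|/2 ≥ (h d_min/π)^{k−1} (j−1)!(k−j)!. -/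
open Complex

/-- Chord length identity: `|e^{ix} - e^{iy}| = 2|sin((x-y)/2)|`. -/
lemma chord_abs_eq (x y : ℝ) :
    ‖Complex.exp (Complex.I * x) - Complex.exp (Complex.I * y)‖
      = 2 * |Real.sin ((x - y) / 2)| := by
  have hsin : Complex.exp ((((x - y) / 2 : ℝ) : ℂ) * Complex.I)
      - Complex.exp (-((((x - y) / 2 : ℝ) : ℂ) * Complex.I))
      = 2 * Complex.I * Complex.sin (((x - y) / 2 : ℝ)) := by
    rw [Complex.sin, neg_mul]
    linear_combination (Complex.exp ((((x - y) / 2 : ℝ) : ℂ) * Complex.I)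
      - Complex.exp (-((((x - y) / 2 : ℝ) : ℂ) * Complex.I))) * Complex.I_sq
  have key : Complex.exp (Complex.I * x) - Complex.exp (Complex.I * y)
      = Complex.exp ((((x + y) / 2 : ℝ) : ℂ) * Complex.I) *
        (2 * Complex.I * Complex.sin (((x - y) / 2 : ℝ))) := by
    rw [← hsin, mul_sub, ← Complex.exp_add, ← Complex.exp_add]
    push_cast
    ring_nf
  rw [key, norm_mul, Complex.norm_exp_ofReal_mul_I, one_mul, norm_mul, norm_mul,
    Complex.norm_two, Complex.norm_I, ← Complex.ofReal_sin, Complex.norm_real, Real.norm_eq_abs]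
  ring

/-- Product of distances to `j` within `range k` equals `j! (k-1-j)!`. -/
lemma prod_dist_factorial (k : ℕ) (j : Fin k) :
    (∏ i ∈ Finset.univ.erase j, Nat.dist i.val j.val)
      = Nat.factorial j.val * Nat.factorial (k - 1 - j.val) := by
  set F : ℕ → ℕ := fun n => if n = j.val then 1 else Nat.dist n j.val with hF
  have h1 : (∏ i ∈ Finset.univ.erase j, Nat.dist i.val j.val)
      = ∏ i ∈ Finset.univ.erase j, F i.val := by
    apply Finset.prod_congr rfl
    intro i hi
    have : i ≠ j := Finset.ne_of_mem_erase hi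
    have : i.val ≠ j.val := fun hc => this (Fin.ext hc)
    simp [hF, this]
  have h2 : (∏ i ∈ Finset.univ.erase j, F i.val) = ∏ i : Fin k, F i.val := by
    apply Finset.prod_erase
    simp [hF]
  have h3 : (∏ i : Fin k, F i.val) = ∏ i ∈ Finset.range k, F i :=
    Fin.prod_univ_eq_prod_range _ _
  have hjk : j.val < k := j.isLt
  have h4 : (∏ i ∈ Finset.range k, F i)
      = (∏ i ∈ Finset.Ico 0 j.val, F i) * ∏ i ∈ Finset.Ico j.val k, F i := by
    rw [Finset.prod_Ico_consecutive _ (Nat.zero_le _) hjk.le, ← Finset.range_eq_Ico]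
  have h5 : (∏ i ∈ Finset.Ico 0 j.val, F i) = Nat.factorial j.val := by
    rw [← Finset.range_eq_Ico]
    have : ∀ i ∈ Finset.range j.val, F i = (j.val - 1 - i) + 1 := by
      intro i hi
      have hij : i < j.val := Finset.mem_range.mp hi
      have : i ≠ j.val := hij.ne
      simp only [hF, if_neg this, Nat.dist]
      omega
    rw [Finset.prod_congr rfl this, Finset.prod_range_reflect (fun m => m + 1) j.val]
    exact Finset.prod_range_add_one_eq_factorial j.val
  have h6 : (∏ i ∈ Finset.Ico j.val k, F i) = Nat.factorial (k - 1 - j.val) := by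
    rw [Finset.prod_eq_prod_Ico_succ_bot hjk]
    have hj1 : F j.val = 1 := by simp [hF]
    rw [hj1, one_mul, Finset.prod_Ico_eq_prod_range]
    have : ∀ i ∈ Finset.range (k - (j.val + 1)), F (j.val + 1 + i) = i + 1 := by
      intro i hi
      have : j.val + 1 + i ≠ j.val := by omega
      simp only [hF, if_neg this, Nat.dist]
      omega
    rw [Finset.prod_congr rfl this, Finset.prod_range_add_one_eq_factorial]
    congr 1
    omega
  rw [h1, h2, h3, h4, h5, h6]

/-- Separation bound: well-separated monotone points satisfy
`d * dist(i,j) ≤ |μ i - μ j|`. -/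
lemma sep_dist_bound {k : ℕ} {d : ℝ} {μ : Fin k → ℝ} (hmono : StrictMono μ)
    (hsep : ∀ i j : Fin k, i ≠ j → d ≤ |μ i - μ j|) :
    ∀ i j : Fin k, d * (Nat.dist i.val j.val) ≤ |μ i - μ j| := by
  have key : ∀ n : ℕ, ∀ i j : Fin k, i.val + n = j.val → d * n ≤ μ j - μ i := by
    intro n
    induction n with
    | zero =>
      intro i j hij
      have : i = j := Fin.ext (by omega)
      simp [this]
    | succ n ih =>
      intro i j hij
      have hj' : i.val + n < k := by omega
      set j' : Fin k := ⟨i.val + n, hj'⟩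
      have h1 : d * n ≤ μ j' - μ i := ih i j' rfl
      have hlt : j' < j := by
        rw [Fin.lt_def]; simp [j']; omega
      have h2 : d ≤ μ j - μ j' := by
        have := hsep j' j hlt.ne
        rwa [abs_of_nonpos (by linarith [hmono hlt]), neg_sub] at this
      push_cast
      linarith
  intro i j
  rcases lt_trichotomy i j with hlt | heq | hlt
  · have := key (j.val - i.val) i j (by omega)
    rw [_root_.abs_of_nonpos (by linarith [hmono hlt]), neg_sub]
    rw [Nat.dist_eq_max_sub_min]
    have : min i.val j.val = i.val := by omega
    have hmax : max i.val j.val = j.val := by omega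
    calc d * ((max i.val j.val - min i.val j.val : ℕ) : ℝ)
        = d * ((j.val - i.val : ℕ) : ℝ) := by rw [this, hmax]
      _ ≤ μ j - μ i := key (j.val - i.val) i j (by omega)
  · simp [heq, Nat.dist_self]
  · have := key (i.val - j.val) j i (by omega)
    rw [_root_.abs_of_nonneg (by linarith [hmono hlt])]
    rw [Nat.dist_eq_max_sub_min]
    have hmin : min i.val j.val = j.val := by omega
    have hmax : max i.val j.val = i.val := by omega
    calc d * ((max i.val j.val - min i.val j.val : ℕ) : ℝ)
        = d * ((i.val - j.val : ℕ) : ℝ) := by rw [hmin, hmax]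
      _ ≤ μ i - μ j := key (i.val - j.val) j i (by omega)

/-- **Lower bound on products of chord lengths** (0-based index `j`, so that the
`1`-based claim `∏_{i≠j} |e^{iμ_i h} − e^{iμ_j h}|/2 ≥ (h d_min/π)^{k−1}(j−1)!(k−j)!`
reads `j!(k−1−j)!` here).  Combines the chord inequality
`|e^{iμ_i h} − e^{iμ_j h}| ≥ (2h/π)|μ_i − μ_j|` with the factorial bound for
well-separated points. -/
theorem prod_chord_lengths_lower_bound (k : ℕ) (h d : ℝ) (hh : 0 < h) (hd : 0 < d)
    (μ : Fin k → ℝ) (hmono : StrictMono μ)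
    (hrange : ∀ i, μ i ∈ Set.Ico (-(Real.pi / (2 * h))) (Real.pi / (2 * h)))
    (hsep : ∀ i j : Fin k, i ≠ j → d ≤ |μ i - μ j|) :
    ∀ j : Fin k,
      (h * d / Real.pi) ^ (k - 1) * (Nat.factorial j) * (Nat.factorial (k - 1 - j)) ≤
        ∏ i ∈ Finset.univ.erase j,
          ‖Complex.exp (Complex.I * μ i * h) - Complex.exp (Complex.I * μ j * h)‖ / 2 := by
  intro j
  have hpi := Real.pi_pos
  -- range of x_i := μ i * h
  have hx : ∀ i : Fin k, μ i * h ∈ Set.Ico (-(Real.pi / 2)) (Real.pi / 2) := by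
    intro i
    obtain ⟨h1, h2⟩ := hrange i
    have e : Real.pi / (2 * h) * h = Real.pi / 2 := by field_simp
    constructor
    · have := mul_le_mul_of_nonneg_right h1 hh.le
      rw [neg_mul, e] at this
      linarith
    · have := mul_lt_mul_of_pos_right h2 hh
      rw [e] at this
      linarith
  -- pointwise bound
  have point : ∀ i ∈ Finset.univ.erase j,
      (h * d / Real.pi) * (Nat.dist i.val j.val : ℝ) ≤
        ‖Complex.exp (Complex.I * μ i * h) - Complex.exp (Complex.I * μ j * h)‖ / 2 := by
    intro i hi
    have hij : i ≠ j := Finset.ne_of_mem_erase hi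
    have hcast : Complex.I * (μ i : ℂ) * (h : ℂ) = Complex.I * ((μ i * h : ℝ) : ℂ) := by
      push_cast; ring
    have hcast' : Complex.I * (μ j : ℂ) * (h : ℂ) = Complex.I * ((μ j * h : ℝ) : ℂ) := by
      push_cast; ring
    rw [hcast, hcast', chord_abs_eq]
    set t : ℝ := (μ i * h - μ j * h) / 2 with ht
    have hxi := hx i
    have hxj := hx j
    obtain ⟨a1, a2⟩ := hxi
    obtain ⟨b1, b2⟩ := hxj
    have habs : |t| ≤ Real.pi / 2 := by
      rw [abs_le, ht]
      constructor <;> [linarith; linarith]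
    have hjordan := Real.mul_abs_le_abs_sin habs
    have hsepb := sep_dist_bound hmono hsep i j
    have habst : |t| = h * |μ i - μ j| / 2 := by
      rw [ht, abs_div, abs_of_pos (by norm_num : (0:ℝ) < 2)]
      congr 1
      rw [← sub_mul, abs_mul, abs_of_pos hh]
      ring
    have hkey : h * (d * (Nat.dist i.val j.val : ℝ)) ≤ h * |μ i - μ j| :=
      mul_le_mul_of_nonneg_left hsepb hh.le
    have : (h * d / Real.pi) * (Nat.dist i.val j.val : ℝ) ≤ 2 / Real.pi * |t| := by
      rw [habst]
      rw [div_mul_eq_mul_div, div_le_iff₀ hpi]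
      have h2 : 2 / Real.pi * (h * |μ i - μ j| / 2) * Real.pi = h * |μ i - μ j| := by
        field_simp
      rw [h2]
      linarith [hkey]
    calc (h * d / Real.pi) * (Nat.dist i.val j.val : ℝ) ≤ 2 / Real.pi * |t| := this
      _ ≤ |Real.sin t| := hjordan
      _ = 2 * |Real.sin t| / 2 := by ring
  -- product bound
  have hprodle : ∏ i ∈ Finset.univ.erase j, ((h * d / Real.pi) * (Nat.dist i.val j.val : ℝ)) ≤
      ∏ i ∈ Finset.univ.erase j,
        ‖Complex.exp (Complex.I * μ i * h) - Complex.exp (Complex.I * μ j * h)‖ / 2 := by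
    apply Finset.prod_le_prod
    · intro i hi
      positivity
    · exact point
  refine le_trans (le_of_eq ?_) hprodle
  rw [Finset.prod_mul_distrib, Finset.prod_const]
  have hcard : (Finset.univ.erase j).card = k - 1 := by
    rw [Finset.card_erase_of_mem (Finset.mem_univ j), Finset.card_univ, Fintype.card_fin]
  rw [hcard]
  have := prod_dist_factorial k j
  rw [mul_assoc]
  congr 1
  rw [← Nat.cast_prod, this]
  push_cast
  ring
end
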